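/- Single Z₁ phase errors have the following syndromes: for each logical codeword |ψ⟩ ∈ {|0_L⟩, |1_L⟩, |2_L⟩}, (i) if j ∈ {0,4} then S₁(Z₁^(j)|ψ⟩) = ω²·Z₁^(j)|ψ⟩ and S₂(Z₁^(j)|ψ⟩) = Z₁^(j)|ψ⟩; (ii) if j ∈ {2,6} then S₁ gives eigenvalue ω and S₂ gives eigenvalue 1 on Z₁^(j)|ψ⟩; (iii) if j ∈ {1,5} then S₁ gives eigenvalue 1 and S₂ gives eigenvalue ω²; (iv) if j = 3 then S₁ gives eigenvalue 1 and S₂ gives eigenvalue ω. -/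
import Mathlib


open Complex Matrix

noncomputable section

/-- ω = exp(2πi/3), a primitive cube root of unity. -/
def ω : ℂ := Complex.exp (2 * (Real.pi : ℂ) * Complex.I / 3)

/-- The ternary cyclic shift matrix: X₁ e_j = e_{(j+1) mod 3}. -/
def X1 : Matrix (Fin 3) (Fin 3) ℂ := Matrix.of fun i j => if i = j + 1 then (1 : ℂ) else 0

/-- The ternary phase matrix Z₁ = diag(1, ω, ω²). -/
def Z1 : Matrix (Fin 3) (Fin 3) ℂ := Matrix.diagonal ![1, ω, ω ^ 2]

/-- X₂ = X₁·X₁. -/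
def X2 : Matrix (Fin 3) (Fin 3) ℂ := X1 * X1

/-- Z₂ = Z₁·Z₁. -/
def Z2 : Matrix (Fin 3) (Fin 3) ℂ := Z1 * Z1

/-- The 7-qutrit state space. -/
abbrev V : Type := (Fin 7 → Fin 3) → ℂ

/-- Standard basis vector of the 7-qutrit state space indexed by a ternary string. -/
def e (s : Fin 7 → Fin 3) : V := fun t => if t = s then 1 else 0

/-- Action on the 7-qutrit space of a tensor product M₀ ⊗ M₁ ⊗ … ⊗ M₆ of 3×3 matrices. -/
def act (M : Fin 7 → Matrix (Fin 3) (Fin 3) ℂ) (v : V) : V :=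
  fun s => ∑ t : Fin 7 → Fin 3, (∏ j : Fin 7, M j (s j) (t j)) * v t

/-- `applyAt M j` applies the single-qutrit operator `M` at position `j` (identity elsewhere). -/
def applyAt (M : Matrix (Fin 3) (Fin 3) ℂ) (j : Fin 7) : V → V :=
  act (fun k => if k = j then M else 1)

/-- The unnormalized logical codeword |0_L⟩. -/
def c0 : V :=
  e ![0,0,0,0,0,0,0] + e ![1,0,2,0,1,0,2] + e ![2,0,1,0,2,0,1]
    + e ![0,1,0,2,0,1,0] + e ![1,1,2,2,1,1,2] + e ![2,1,1,2,2,1,1]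
    + e ![0,2,0,1,0,2,0] + e ![1,2,2,1,1,2,2] + e ![2,2,1,1,2,2,1]

/-- The unnormalized logical codeword |1_L⟩. -/
def c1 : V :=
  e ![1,1,1,1,1,1,1] + e ![2,1,0,1,2,1,0] + e ![0,1,2,1,0,1,2]
    + e ![1,2,1,0,1,2,1] + e ![2,2,0,0,2,2,0] + e ![0,2,2,0,0,2,2]
    + e ![1,0,1,2,1,0,1] + e ![2,0,0,2,2,0,0] + e ![0,0,2,2,0,0,2]

/-- The unnormalized logical codeword |2_L⟩. -/
def c2 : V :=
  e ![2,2,2,2,2,2,2] + e ![0,2,1,2,0,2,1] + e ![1,2,0,2,1,2,0]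
    + e ![2,0,2,1,2,0,2] + e ![0,0,1,1,0,0,1] + e ![1,0,0,1,1,0,0]
    + e ![2,1,2,0,2,1,2] + e ![0,1,1,0,0,1,1] + e ![1,1,0,0,1,1,0]

/-- The three logical codewords. -/
def cw : Fin 3 → V := ![c0, c1, c2]

/-- Phase-error stabilizer S₁ = X₁⊗I⊗X₂⊗I⊗X₁⊗I⊗X₂. -/
def S1 : V → V := act ![X1, 1, X2, 1, X1, 1, X2]

/-- Phase-error stabilizer S₂ = I⊗X₁⊗I⊗X₂⊗I⊗X₁⊗I. -/
def S2 : V → V := act ![1, X1, 1, X2, 1, X1, 1]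

/-- Bit-error stabilizer S₃ = Z₁⊗Z₂⊗Z₁⊗Z₂⊗I⊗I⊗I. -/
def S3 : V → V := act ![Z1, Z2, Z1, Z2, 1, 1, 1]

/-- Bit-error stabilizer S₄ = I⊗I⊗I⊗Z₁⊗Z₂⊗Z₁⊗Z₂. -/
def S4 : V → V := act ![1, 1, 1, Z1, Z2, Z1, Z2]

/-- Bit-error stabilizer S₅ = I⊗Z₁⊗Z₂⊗Z₁⊗Z₂⊗I⊗I. -/
def S5 : V → V := act ![1, Z1, Z2, Z1, Z2, 1, 1]

/-- Bit-error stabilizer S₆ = I⊗I⊗Z₁⊗Z₂⊗Z₁⊗Z₂⊗I. -/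
def S6 : V → V := act ![1, 1, Z1, Z2, Z1, Z2, 1]
lemma omega_pow_three : ω ^ 3 = 1 := by
  rw [ω, ← Complex.exp_nat_mul]
  rw [show (3:ℕ) * (2 * (Real.pi : ℂ) * Complex.I / 3) = 2 * Real.pi * Complex.I by push_cast; ring]
  exact Complex.exp_two_pi_mul_I

lemma omega_pow_four : ω ^ 4 = ω := by
  rw [show (4:ℕ) = 3 + 1 from rfl, pow_succ, omega_pow_three, one_mul]

def shiftM (k : Fin 3) : Matrix (Fin 3) (Fin 3) ℂ :=
  Matrix.of fun i m => if i = m + k then 1 else 0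

lemma act_shift (a s : Fin 7 → Fin 3) :
    act (fun j => shiftM (a j)) (e s) = e (s + a) := by
  funext t
  simp only [act, e, mul_ite, mul_one, mul_zero, Finset.sum_ite_eq', Finset.mem_univ, if_true,
    shiftM, Matrix.of_apply]
  rw [Finset.prod_boole]
  simp [funext_iff]

lemma Z1_apply (i m : Fin 3) : Z1 i m = if i = m then ω ^ (m : ℕ) else 0 := by
  fin_cases i <;> fin_cases m <;> simp [Z1, Matrix.diagonal_apply]

lemma applyAt_Z1_e (j : Fin 7) (s : Fin 7 → Fin 3) :
    applyAt Z1 j (e s) = ω ^ (s j : ℕ) • e s := by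
  funext t
  simp only [applyAt, act, e, mul_ite, mul_one, mul_zero, Finset.sum_ite_eq', Finset.mem_univ,
    if_true, Pi.smul_apply, smul_eq_mul]
  have h : ∀ k : Fin 7, (if k = j then Z1 else 1) (t k) (s k)
      = (if t k = s k then 1 else 0) * (if k = j then ω ^ (s k : ℕ) else 1) := by
    intro k
    by_cases hk : k = j <;> simp [hk, Matrix.one_apply, Z1_apply]
  rw [Finset.prod_congr rfl (fun k _ => h k), Finset.prod_mul_distrib, Finset.prod_boole,
    Finset.prod_ite_eq' Finset.univ j (fun k => ω ^ (s k : ℕ))]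
  simp [funext_iff, mul_comm]

lemma act_add (M : Fin 7 → Matrix (Fin 3) (Fin 3) ℂ) (u v : V) :
    act M (u + v) = act M u + act M v := by
  funext t; simp [act, mul_add, Finset.sum_add_distrib]

lemma act_smul (M : Fin 7 → Matrix (Fin 3) (Fin 3) ℂ) (c : ℂ) (v : V) :
    act M (c • v) = c • act M v := by
  funext t
  simp only [act, Pi.smul_apply, smul_eq_mul, Finset.mul_sum]
  exact Finset.sum_congr rfl fun x _ => by ring

lemma applyAt_add (M : Matrix (Fin 3) (Fin 3) ℂ) (j : Fin 7) (u v : V) :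
    applyAt M j (u + v) = applyAt M j u + applyAt M j v := act_add _ _ _

lemma S1_add (u v : V) : S1 (u + v) = S1 u + S1 v := act_add _ _ _
lemma S2_add (u v : V) : S2 (u + v) = S2 u + S2 v := act_add _ _ _
lemma S1_smul (c : ℂ) (v : V) : S1 (c • v) = c • S1 v := act_smul _ _ _
lemma S2_smul (c : ℂ) (v : V) : S2 (c • v) = c • S2 v := act_smul _ _ _

lemma X1_eq : X1 = shiftM 1 := rfl

lemma one_eq_shiftM : (1 : Matrix (Fin 3) (Fin 3) ℂ) = shiftM 0 := by
  ext i m; simp [shiftM, Matrix.one_apply]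

lemma X2_eq : X2 = shiftM 2 := by
  ext i m
  fin_cases i <;> fin_cases m <;>
    simp [X2, X1, shiftM, Matrix.mul_apply, Fin.sum_univ_three]

lemma S1_e (s : Fin 7 → Fin 3) : S1 (e s) = e (s + ![1,0,2,0,1,0,2]) := by
  have : (![X1, 1, X2, 1, X1, 1, X2] : Fin 7 → Matrix (Fin 3) (Fin 3) ℂ)
      = fun j => shiftM (![1,0,2,0,1,0,2] j) := by
    funext j
    fin_cases j
    · exact X1_eq
    · exact one_eq_shiftM
    · exact X2_eq
    · exact one_eq_shiftM
    · exact X1_eq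
    · exact one_eq_shiftM
    · exact X2_eq
  rw [S1, this, act_shift]

lemma S2_e (s : Fin 7 → Fin 3) : S2 (e s) = e (s + ![0,1,0,2,0,1,0]) := by
  have : (![1, X1, 1, X2, 1, X1, 1] : Fin 7 → Matrix (Fin 3) (Fin 3) ℂ)
      = fun j => shiftM (![0,1,0,2,0,1,0] j) := by
    funext j
    fin_cases j
    · exact one_eq_shiftM
    · exact X1_eq
    · exact one_eq_shiftM
    · exact X2_eq
    · exact one_eq_shiftM
    · exact X1_eq
    · exact one_eq_shiftM
  rw [S2, this, act_shift]

section vecEval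
variable {α : Type*} (a b c d f g h : α)
lemma cv0 : ![a,b,c,d,f,g,h] 0 = a := rfl
lemma cv1 : ![a,b,c,d,f,g,h] 1 = b := rfl
lemma cv2 : ![a,b,c,d,f,g,h] 2 = c := rfl
lemma cv3 : ![a,b,c,d,f,g,h] 3 = d := rfl
lemma cv4 : ![a,b,c,d,f,g,h] 4 = f := rfl
lemma cv5 : ![a,b,c,d,f,g,h] 5 = g := rfl
lemma cv6 : ![a,b,c,d,f,g,h] 6 = h := rfl
end vecEval

/-- Syndromes of single Z₁ phase errors: on each corrupted codeword Z₁^(j)|ψ⟩,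
(i) j ∈ {0,4}: S₁ gives eigenvalue ω², S₂ gives 1; (ii) j ∈ {2,6}: S₁ gives ω, S₂ gives 1;
(iii) j ∈ {1,5}: S₁ gives 1, S₂ gives ω²; (iv) j = 3: S₁ gives 1, S₂ gives ω. -/
theorem Z1_error_syndromes :
    ∀ i : Fin 3, ∀ j : Fin 7,
      ((j = 0 ∨ j = 4) →
        S1 (applyAt Z1 j (cw i)) = ω ^ 2 • applyAt Z1 j (cw i) ∧
        S2 (applyAt Z1 j (cw i)) = applyAt Z1 j (cw i)) ∧
      ((j = 2 ∨ j = 6) →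
        S1 (applyAt Z1 j (cw i)) = ω • applyAt Z1 j (cw i) ∧
        S2 (applyAt Z1 j (cw i)) = applyAt Z1 j (cw i)) ∧
      ((j = 1 ∨ j = 5) →
        S1 (applyAt Z1 j (cw i)) = applyAt Z1 j (cw i) ∧
        S2 (applyAt Z1 j (cw i)) = ω ^ 2 • applyAt Z1 j (cw i)) ∧
      (j = 3 →
        S1 (applyAt Z1 j (cw i)) = applyAt Z1 j (cw i) ∧
        S2 (applyAt Z1 j (cw i)) = ω • applyAt Z1 j (cw i)) := by
  intro i j
  have hcw : cw i = c0 ∨ cw i = c1 ∨ cw i = c2 := by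
    fin_cases i
    exacts [Or.inl rfl, Or.inr (Or.inl rfl), Or.inr (Or.inr rfl)]
  obtain hc | hc | hc := hcw <;> rw [hc] <;>
    refine ⟨fun h => ?_, fun h => ?_, fun h => ?_, fun h => ?_⟩ <;>
    (first | (rcases h with rfl | rfl) | subst h) <;>
    constructor <;>
    (simp only [c0, c1, c2, applyAt_add, applyAt_Z1_e, S1_add, S1_smul, S1_e, S2_add, S2_smul,
       S2_e, cv0, cv1, cv2, cv3, cv4, cv5, cv6];
     simp only [Matrix.cons_add_cons, Matrix.empty_add_empty, Fin.isValue, Fin.reduceAdd,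
       Fin.val_zero, Fin.val_one, Fin.val_two, pow_zero, pow_one, one_smul];
     match_scalars <;> ring_nf <;> simp [omega_pow_three, omega_pow_four])
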